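/- Let M be a finitely generated module over a Noetherian local ring (O, M_P) with residue field k, and assume dim_k M is finite. Then for every integer ε ≥ 0, dim_k M ≥ dim_k(M / M_P^ε M) ≥ min{ε, dim_k M}. -/

import Mathlib

/-- Let `M` be a finitely generated module over a Noetherian local ring `O` with residue
field `k`, and assume `dim_k M` is finite. Then for every `ε ≥ 0`,
`dim_k M ≥ dim_k (M / m^ε M) ≥ min(ε, dim_k M)`. -/
theorem stmt_9 (k O M : Type*) [Field k] [CommRing O] [IsNoetherianRing O] [IsLocalRing O]
    [Algebra k O]
    (hres : Function.Bijective (algebraMap k (IsLocalRing.ResidueField O)))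
    [AddCommGroup M] [Module O M] [Module k M] [IsScalarTower k O M]
    [Module.Finite O M] [FiniteDimensional k M] (ε : ℕ) :
    Module.finrank k M ≥
        Module.finrank k
          (M ⧸ (Submodule.restrictScalars k
            (IsLocalRing.maximalIdeal O ^ ε • (⊤ : Submodule O M)))) ∧
      Module.finrank k
          (M ⧸ (Submodule.restrictScalars k
            (IsLocalRing.maximalIdeal O ^ ε • (⊤ : Submodule O M)))) ≥
        min ε (Module.finrank k M) := by
  have key : ∀ n : ℕ, Module.finrank k
      (Submodule.restrictScalars k (IsLocalRing.maximalIdeal O ^ n • (⊤ : Submodule O M)))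
      + min n (Module.finrank k M) ≤ Module.finrank k M := by
    intro n
    induction n with
    | zero =>
      simpa using Submodule.finrank_le _
    | succ n ih =>
      set P : Submodule O M := IsLocalRing.maximalIdeal O ^ n • ⊤ with hP
      have hQ : IsLocalRing.maximalIdeal O ^ (n+1) • (⊤ : Submodule O M)
          = IsLocalRing.maximalIdeal O • P := by
        rw [hP, pow_succ', ← smul_eq_mul, Submodule.smul_assoc]
      by_cases hle : P ≤ IsLocalRing.maximalIdeal O • P
      · have hbot : P = ⊥ := by
          refine Submodule.eq_bot_of_le_smul_of_le_jacobson_bot (IsLocalRing.maximalIdeal O) P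
            ?_ hle ?_
          · exact IsNoetherian.noetherian P
          · rw [IsLocalRing.jacobson_eq_maximalIdeal ⊥ bot_ne_top]
        rw [hQ, hbot, Submodule.smul_bot]
        rw [Submodule.restrictScalars_bot, finrank_bot]
        simp
      · have hlt : Submodule.restrictScalars k (IsLocalRing.maximalIdeal O • P)
            < Submodule.restrictScalars k P := by
          refine lt_of_le_of_ne ?_ ?_
          · exact Submodule.smul_le_right
          · intro h
            exact hle (le_of_eq (Submodule.restrictScalars_injective k O M h).symm)
        have hr := Submodule.finrank_lt_finrank_of_lt hlt
        rw [hQ]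
        have hmin : min (n+1) (Module.finrank k M) ≤ min n (Module.finrank k M) + 1 := by omega
        omega
  have hq := Submodule.finrank_quotient_add_finrank
    (Submodule.restrictScalars k (IsLocalRing.maximalIdeal O ^ ε • (⊤ : Submodule O M)))
  constructor
  · omega
  · have := key ε; omega
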